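/- Let λ = (λ_1,…,λ_n) be a partition of n, d_i = λ_i + n − i, P = {d_1,…,d_n}, and let f_i = u^{d_i} + Σ_{j : 1 ≤ j ≤ d_i, d_i−j ∉ P} f_{i,j} u^{d_i−j} ∈ R[u], where R is the polynomial ring over ℂ in the variables f_{i,j}, graded by deg f_{i,j} = j. Then the Wronskian Wr(f_1,…,f_n) is a homogeneous polynomial of degree n: writing Wr(f_1,…,f_n) = Σ_{s=0}^n r_s u^{n−s}, each coefficient r_s ∈ R is homogeneous of degree s. -/

import Mathlib

/-- `d_i = λ_i + n − i`, with rows indexed by `i : Fin n` (so `i` stands for row `i+1`). -/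
def dSeq (n : ℕ) (lam : Fin n → ℕ) (i : Fin n) : ℕ := lam i + (n - 1 - (i : ℕ))

/-- `P = {d_1, …, d_n}`. -/
def dSet (n : ℕ) (lam : Fin n → ℕ) : Finset ℕ := Finset.image (dSeq n lam) Finset.univ

/-- `f_i = u^{d_i} + Σ_{j : 1 ≤ j ≤ d_i, d_i−j ∉ P} f_{i,j} u^{d_i−j}`, a polynomial in `u`
over the polynomial ring `ℂ[f_{i,j}]` (the variable `f_{i,j}` is `MvPolynomial.X (i,j)`). -/
noncomputable def rowPoly (n : ℕ) (lam : Fin n → ℕ) (i : Fin n) :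
    Polynomial (MvPolynomial (Fin n × ℕ) ℂ) :=
  Polynomial.X ^ (dSeq n lam i) +
    ∑ j ∈ (Finset.Icc 1 (dSeq n lam i)).filter (fun j => dSeq n lam i - j ∉ dSet n lam),
      Polynomial.C (MvPolynomial.X (i, j)) * Polynomial.X ^ (dSeq n lam i - j)

/-- The Wronskian `Wr(f_1,…,f_n)`. -/
noncomputable def wronskianPoly (n : ℕ) (lam : Fin n → ℕ) :
    Polynomial (MvPolynomial (Fin n × ℕ) ℂ) :=
  Matrix.det (Matrix.of fun a b : Fin n => Polynomial.derivative^[(a : ℕ)] (rowPoly n lam b))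

/-- `r_s`: the coefficient of `u^{n−s}` in `Wr(f_1,…,f_n)`. -/
noncomputable def rCoeff (n : ℕ) (lam : Fin n → ℕ) (s : ℕ) : MvPolynomial (Fin n × ℕ) ℂ :=
  (wronskianPoly n lam).coeff (n - s)

section Aux

variable {n : ℕ}

/-- Integer weight function. -/
def wZ (n : ℕ) : Fin n × ℕ → ℤ := fun p => (p.2 : ℤ)

/-- `Good D p` : coefficient of `u^k` is weighted homogeneous of degree `D - k`. -/
def Good (n : ℕ) (D : ℤ) (p : Polynomial (MvPolynomial (Fin n × ℕ) ℂ)) : Prop :=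
  ∀ k : ℕ, MvPolynomial.IsWeightedHomogeneous (wZ n) (p.coeff k) (D - k)

lemma eq_zero_of_homog_neg {p : MvPolynomial (Fin n × ℕ) ℂ} {m : ℤ}
    (h : MvPolynomial.IsWeightedHomogeneous (wZ n) p m) (hm : m < 0) : p = 0 := by
  ext d
  rw [MvPolynomial.coeff_zero]
  by_contra hc
  have hw := h hc
  have : (0 : ℤ) ≤ Finsupp.weight (wZ n) d := by
    rw [Finsupp.weight_apply, Finsupp.sum]
    exact Finset.sum_nonneg fun i _ => by simp only [wZ, smul_eq_mul]; positivity
  omega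

lemma weight_cast (d : Fin n × ℕ →₀ ℕ) :
    Finsupp.weight (wZ n) d = ((Finsupp.weight (fun p : Fin n × ℕ => p.2) d : ℕ) : ℤ) := by
  rw [Finsupp.weight_apply, Finsupp.weight_apply, Finsupp.sum, Finsupp.sum, Nat.cast_sum]
  exact Finset.sum_congr rfl fun i _ => by simp [wZ]

lemma homog_of_homogZ {p : MvPolynomial (Fin n × ℕ) ℂ} {s : ℕ}
    (h : MvPolynomial.IsWeightedHomogeneous (wZ n) p (s : ℤ)) :
    MvPolynomial.IsWeightedHomogeneous (fun p : Fin n × ℕ => p.2) p s := by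
  intro d hd
  have := h hd
  rw [weight_cast] at this
  exact_mod_cast this

lemma Good.add {D : ℤ} {p q} (hp : Good n D p) (hq : Good n D q) : Good n D (p + q) :=
  fun k => by rw [Polynomial.coeff_add]; exact (hp k).add (hq k)

lemma Good.sum {ι : Type*} (s : Finset ι) (f : ι → Polynomial (MvPolynomial (Fin n × ℕ) ℂ))
    {D : ℤ} (h : ∀ i ∈ s, Good n D (f i)) : Good n D (∑ i ∈ s, f i) := fun k => by
  rw [Polynomial.finset_sum_coeff]
  exact MvPolynomial.IsWeightedHomogeneous.sum _ _ _ fun i hi => h i hi k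

lemma Good.mul {D E : ℤ} {p q} (hp : Good n D p) (hq : Good n E q) : Good n (D + E) (p * q) := by
  intro k
  rw [Polynomial.coeff_mul]
  apply MvPolynomial.IsWeightedHomogeneous.sum
  intro x hx
  have hxk : x.1 + x.2 = k := Finset.HasAntidiagonal.mem_antidiagonal.mp hx
  have := (hp x.1).mul (hq x.2)
  convert this using 1
  subst hxk
  push_cast
  ring

lemma Good.prod {ι : Type*} (s : Finset ι) (f : ι → Polynomial (MvPolynomial (Fin n × ℕ) ℂ))
    (D : ι → ℤ) (h : ∀ i ∈ s, Good n (D i) (f i)) :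
    Good n (∑ i ∈ s, D i) (∏ i ∈ s, f i) := by
  classical
  induction s using Finset.induction_on with
  | empty =>
    intro k
    simp only [Finset.prod_empty, Finset.sum_empty, Polynomial.coeff_one]
    split_ifs with hk
    · subst hk; simpa using MvPolynomial.isWeightedHomogeneous_one _ _
    · exact MvPolynomial.isWeightedHomogeneous_zero _ _ _
  | @insert a s' hi ih =>
    rw [Finset.prod_insert hi, Finset.sum_insert hi]
    exact (h a (Finset.mem_insert_self a s')).mul (ih fun i hh => h i (Finset.mem_insert_of_mem hh))

lemma Good.derivative {D : ℤ} {p} (hp : Good n D p) : Good n (D - 1) (Polynomial.derivative p) := by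
  intro k
  rw [Polynomial.coeff_derivative]
  have h1 : MvPolynomial.IsWeightedHomogeneous (wZ n)
      ((k + 1 : ℕ) : MvPolynomial (Fin n × ℕ) ℂ) 0 := by
    rw [← MvPolynomial.C_eq_coe_nat]
    exact MvPolynomial.isWeightedHomogeneous_C _ _
  have := (hp (k + 1)).mul h1
  convert this using 1 <;> push_cast <;> ring

lemma Good.iterate {D : ℤ} {p} (hp : Good n D p) (a : ℕ) :
    Good n (D - a) (Polynomial.derivative^[a] p) := by
  induction a with
  | zero => simpa using hp
  | succ m ih =>
    rw [Function.iterate_succ_apply']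
    have := ih.derivative
    convert this using 1
    push_cast; ring

lemma Good.intCast (z : ℤ) : Good n 0 (z : Polynomial (MvPolynomial (Fin n × ℕ) ℂ)) := by
  intro k
  rw [← Polynomial.C_eq_intCast, Polynomial.coeff_C]
  split_ifs with hk
  · subst hk
    rw [show ((z : MvPolynomial (Fin n × ℕ) ℂ)) = MvPolynomial.C ((z : ℂ)) from
      (map_intCast (MvPolynomial.C (σ := Fin n × ℕ) (R := ℂ)) z).symm]
    simpa using MvPolynomial.isWeightedHomogeneous_C (wZ n) ((z : ℂ))
  · exact MvPolynomial.isWeightedHomogeneous_zero _ _ _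

end Aux

lemma good_rowPoly (n : ℕ) (lam : Fin n → ℕ) (i : Fin n) :
    Good n (dSeq n lam i : ℤ) (rowPoly n lam i) := by
  rw [rowPoly]
  apply Good.add
  · intro k
    rw [Polynomial.coeff_X_pow]
    split_ifs with h
    · subst h
      simpa using MvPolynomial.isWeightedHomogeneous_one _ _
    · exact MvPolynomial.isWeightedHomogeneous_zero _ _ _
  · apply Good.sum
    intro j hj
    have hjd : 1 ≤ j ∧ j ≤ dSeq n lam i := by
      simpa using Finset.mem_Icc.mp (Finset.mem_filter.mp hj).1
    intro k
    simp only [Polynomial.coeff_C_mul, Polynomial.coeff_X_pow]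
    split_ifs with h
    · subst h
      rw [mul_one]
      have := MvPolynomial.isWeightedHomogeneous_X (R := ℂ) (wZ n) (i, j)
      convert this using 1
      show (dSeq n lam i : ℤ) - ((dSeq n lam i - j : ℕ) : ℤ) = (j : ℤ)
      omega
    · simpa using MvPolynomial.isWeightedHomogeneous_zero _ _ _

lemma good_wronskian (n : ℕ) (lam : Fin n → ℕ) (hsum : ∑ i, lam i = n) :
    Good n (n : ℤ) (wronskianPoly n lam) := by
  rw [wronskianPoly, Matrix.det_apply']
  apply Good.sum
  intro σ _
  have hnat : ∑ i : Fin n, (n - 1 - (i : ℕ)) = ∑ i : Fin n, (i : ℕ) := by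
    rw [Fin.sum_univ_eq_sum_range (fun j => n - 1 - j) n, Fin.sum_univ_eq_sum_range (fun j => j) n]
    exact Finset.sum_range_reflect (fun j => j) n
  have key : (∑ i : Fin n, ((dSeq n lam i : ℤ) - ((σ i : ℕ) : ℤ))) = (n : ℤ) := by
    rw [Finset.sum_sub_distrib]
    have h3 : ∑ i : Fin n, ((σ i : ℕ) : ℤ) = ∑ i : Fin n, ((i : ℕ) : ℤ) :=
      Equiv.sum_comp σ (fun i => ((i : ℕ) : ℤ))
    have h4 : ∑ i : Fin n, (dSeq n lam i : ℤ) = (n : ℤ) + ∑ i : Fin n, ((i : ℕ) : ℤ) := by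
      have : ∑ i, dSeq n lam i = n + ∑ i : Fin n, (i : ℕ) := by
        unfold dSeq
        rw [Finset.sum_add_distrib, hsum, hnat]
      exact_mod_cast this
    rw [h3, h4]; ring
  have h1 : Good n 0 (((Equiv.Perm.sign σ : ℤ) : Polynomial (MvPolynomial (Fin n × ℕ) ℂ))) :=
    Good.intCast _
  have h2 : Good n (∑ i : Fin n, ((dSeq n lam i : ℤ) - ((σ i : ℕ) : ℤ)))
      (∏ i : Fin n, Polynomial.derivative^[((σ i : Fin n) : ℕ)] (rowPoly n lam i)) :=
    Good.prod _ _ _ (fun i _ => (good_rowPoly n lam i).iterate _)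
  rw [key] at h2
  have := h1.mul h2
  rw [zero_add] at this
  convert this using 2
  simp only [Matrix.of_apply]


/-- Lemma: grading `ℂ[f_{i,j}]` by `deg f_{i,j} = j`, the Wronskian `Wr(f_1,…,f_n)` is a
homogeneous polynomial of degree `n`: writing `Wr = Σ_{s=0}^n r_s u^{n−s}`, each
coefficient `r_s` is homogeneous of degree `s`. -/
theorem wronskianPoly_homogeneous (n : ℕ) (lam : Fin n → ℕ)
    (hanti : Antitone lam) (hsum : ∑ i, lam i = n) :
    (wronskianPoly n lam).natDegree ≤ n ∧
      ∀ s : ℕ, s ≤ n →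
        MvPolynomial.IsWeightedHomogeneous (fun p : Fin n × ℕ => p.2)
          (rCoeff n lam s) s := by
  have hGood := good_wronskian n lam hsum
  constructor
  · rw [Polynomial.natDegree_le_iff_coeff_eq_zero]
    intro N hN
    exact eq_zero_of_homog_neg (hGood N) (by omega)
  · intro s hs
    have h := hGood (n - s)
    have hdeg : (n : ℤ) - ((n - s : ℕ) : ℤ) = (s : ℤ) := by omega
    rw [hdeg] at h
    exact homog_of_homogZ h
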